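/- arXiv:1810.12429 — 8 statements merged into one kernel-verified Lean document; each statement's English description precedes it below -/
import Mathlib

section
/- (Discounted density-ratio characterization) Let γ ∈ (0,1), let d_π and d_{π₀} be the discounted visitation distributions under target and behavior policies with d_{π₀}(s) > 0 for all s, and define L(w,f) = γ E_{(s,a,s')∼d_{π₀}}[(w(s)·β(a|s) − w(s'))·f(s')] + (1-γ)·E_{s∼d₀}[(1 − w(s))·f(s)], where β(a|s) = π(a|s)/π₀(a|s) and (s,a,s')∼d_{π₀} means s∼d_{π₀}, a∼π₀(·|s), s'∼T(·|s,a). Then w(s) = d_π(s)/d_{π₀}(s) for all s if and only if L(w,f) = 0 for every function f. -/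
/-- Discounted density-ratio characterization: `w = dπ/dπ0` iff the
loss `L(w,f)` vanishes for every discriminator `f`. -/
theorem stmt_4 {S A : Type*} [Fintype S] [Fintype A]
    (T : S → A → S → ℝ)
    (hTnonneg : ∀ s a s', 0 ≤ T s a s')
    (hTstoch : ∀ s a, ∑ s', T s a s' = 1)
    (π π0 : S → A → ℝ)
    (hπ_nonneg : ∀ s a, 0 ≤ π s a) (hπ_stoch : ∀ s, ∑ a, π s a = 1)
    (hπ0_nonneg : ∀ s a, 0 ≤ π0 s a) (hπ0_stoch : ∀ s, ∑ a, π0 s a = 1)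
    (habs : ∀ s a, 0 < π s a → 0 < π0 s a)
    (d0 : S → ℝ) (hd0_nonneg : ∀ s, 0 ≤ d0 s) (hd0_sum : ∑ s, d0 s = 1)
    (γ : ℝ) (hγ : γ ∈ Set.Ioo (0 : ℝ) 1)
    (dπ dπ0 : S → ℝ)
    -- `dπ` is the unique solution of its discounted fixed-point equation:
    (hdπ_fix : ∀ s', γ * (∑ s, (∑ a, π s a * T s a s') * dπ s) - dπ s'
        + (1 - γ) * d0 s' = 0)
    (hdπ_unique : ∀ d : S → ℝ,
      (∀ s', γ * (∑ s, (∑ a, π s a * T s a s') * d s) - d s'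
        + (1 - γ) * d0 s' = 0) → d = dπ)
    -- `dπ0` solves the analogous equation for the behavior policy and is positive:
    (hdπ0_fix : ∀ s', γ * (∑ s, (∑ a, π0 s a * T s a s') * dπ0 s) - dπ0 s'
        + (1 - γ) * d0 s' = 0)
    (hdπ0_pos : ∀ s, 0 < dπ0 s)
    (w : S → ℝ) :
    (∀ s, w s = dπ s / dπ0 s) ↔
      (∀ f : S → ℝ,
        γ * (∑ s, ∑ a, ∑ s', dπ0 s * π0 s a * T s a s' *
              ((w s * (π s a / π0 s a) - w s') * f s'))
          + (1 - γ) * (∑ s, d0 s * ((1 - w s) * f s)) = 0) := by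
  classical
  -- β-cancellation: π0 * (π/π0) = π (using absolute continuity when π0 = 0)
  have h1 : ∀ s a, π0 s a * (π s a / π0 s a) = π s a := by
    intro s a
    rcases eq_or_lt_of_le (hπ0_nonneg s a) with h | h
    · have hπz : π s a = 0 := by
        by_contra hc
        have hpos := habs s a ((hπ_nonneg s a).lt_of_ne (Ne.symm hc))
        rw [← h] at hpos
        exact lt_irrefl 0 hpos
      rw [← h, hπz]; ring
    · field_simp
  -- Key rewriting of the loss as a single sum over s'
  have key : ∀ f : S → ℝ,
      γ * (∑ s, ∑ a, ∑ s', dπ0 s * π0 s a * T s a s' *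
            ((w s * (π s a / π0 s a) - w s') * f s'))
        + (1 - γ) * (∑ s, d0 s * ((1 - w s) * f s))
      = ∑ s', (γ * (∑ s, (∑ a, π s a * T s a s') * (w s * dπ0 s))
          - w s' * dπ0 s' + (1 - γ) * d0 s') * f s' := by
    intro f
    have hterm : ∀ s a s', dπ0 s * π0 s a * T s a s' *
        ((w s * (π s a / π0 s a) - w s') * f s')
        = (π s a * T s a s') * (w s * dπ0 s) * f s'
          - (π0 s a * T s a s') * dπ0 s * (w s' * f s') := by
      intro s a s'
      linear_combination dπ0 s * T s a s' * w s * f s' * h1 s a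
    have swap : (∑ s, ∑ a, ∑ s', dπ0 s * π0 s a * T s a s' *
        ((w s * (π s a / π0 s a) - w s') * f s'))
        = ∑ s', ∑ s, ∑ a, ((π s a * T s a s') * (w s * dπ0 s) * f s'
          - (π0 s a * T s a s') * dπ0 s * (w s' * f s')) := by
      simp_rw [hterm]
      calc (∑ s, ∑ a, ∑ s', ((π s a * T s a s') * (w s * dπ0 s) * f s'
              - (π0 s a * T s a s') * dπ0 s * (w s' * f s')))
          = ∑ s, ∑ s', ∑ a, ((π s a * T s a s') * (w s * dπ0 s) * f s'
              - (π0 s a * T s a s') * dπ0 s * (w s' * f s')) :=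
            Finset.sum_congr rfl fun s _ => Finset.sum_comm
        _ = _ := Finset.sum_comm
    rw [swap, Finset.mul_sum, Finset.mul_sum, ← Finset.sum_add_distrib]
    refine Finset.sum_congr rfl fun s' _ => ?_
    have e1 : (∑ s, ∑ a, (π s a * T s a s') * (w s * dπ0 s) * f s')
        = (∑ s, (∑ a, π s a * T s a s') * (w s * dπ0 s)) * f s' := by
      rw [Finset.sum_mul]
      refine Finset.sum_congr rfl fun s _ => ?_
      rw [Finset.sum_mul, Finset.sum_mul]
    have e2 : (∑ s, ∑ a, (π0 s a * T s a s') * dπ0 s * (w s' * f s'))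
        = (∑ s, (∑ a, π0 s a * T s a s') * dπ0 s) * (w s' * f s') := by
      rw [Finset.sum_mul]
      refine Finset.sum_congr rfl fun s _ => ?_
      rw [Finset.sum_mul, Finset.sum_mul]
    simp only [Finset.sum_sub_distrib]
    rw [e1, e2]
    linear_combination (-(w s' * f s')) * hdπ0_fix s'
  constructor
  · -- forward direction
    intro hw f
    rw [key f]
    refine Finset.sum_eq_zero fun s' _ => ?_
    have hwd : ∀ s, w s * dπ0 s = dπ s := by
      intro s
      rw [hw s, div_mul_cancel₀]
      exact (hdπ0_pos s).ne'
    simp_rw [hwd]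
    rw [hdπ_fix s', zero_mul]
  · -- backward direction
    intro hf
    have hfix : ∀ s', γ * (∑ s, (∑ a, π s a * T s a s') * (w s * dπ0 s))
        - w s' * dπ0 s' + (1 - γ) * d0 s' = 0 := by
      intro s'
      have h := hf (fun x => if x = s' then 1 else 0)
      rw [key] at h
      simpa using h
    have hd := hdπ_unique (fun s => w s * dπ0 s) hfix
    intro s
    have : w s * dπ0 s = dπ s := congrFun hd s
    rw [← this, mul_div_assoc, div_self (hdπ0_pos s).ne', mul_one]
end

section
/- (Bellman-residual representation of the loss) With L(w,f) as in the discounted density-ratio loss, w* (s) = d_π(s)/d_{π₀}(s), and Πf(s) := f(s) − γ Σ_{s'} T_π(s'|s) f(s'), it holds for all functions w, f that L(w,f) = Σ_s d_{π₀}(s)·(w*(s) − w(s))·Πf(s). -/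
/-- Bellman-residual representation of the loss:
`L(w,f) = ∑_s dπ0(s) (w*(s) − w(s)) Πf(s)` where `w* = dπ/dπ0` and
`Πf(s) = f(s) − γ ∑_{s'} Tπ(s'|s) f(s')`. -/
theorem stmt_5 {S A : Type*} [Fintype S] [Fintype A]
    (T : S → A → S → ℝ)
    (hTnonneg : ∀ s a s', 0 ≤ T s a s')
    (hTstoch : ∀ s a, ∑ s', T s a s' = 1)
    (π π0 : S → A → ℝ)
    (hπ_nonneg : ∀ s a, 0 ≤ π s a) (hπ_stoch : ∀ s, ∑ a, π s a = 1)
    (hπ0_nonneg : ∀ s a, 0 ≤ π0 s a) (hπ0_stoch : ∀ s, ∑ a, π0 s a = 1)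
    (habs : ∀ s a, 0 < π s a → 0 < π0 s a)
    (d0 : S → ℝ) (hd0_nonneg : ∀ s, 0 ≤ d0 s) (hd0_sum : ∑ s, d0 s = 1)
    (γ : ℝ) (hγ : γ ∈ Set.Ioo (0 : ℝ) 1)
    (dπ dπ0 : S → ℝ)
    (hdπ_fix : ∀ s', γ * (∑ s, (∑ a, π s a * T s a s') * dπ s) - dπ s'
        + (1 - γ) * d0 s' = 0)
    (hdπ0_fix : ∀ s', γ * (∑ s, (∑ a, π0 s a * T s a s') * dπ0 s) - dπ0 s'
        + (1 - γ) * d0 s' = 0)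
    (hdπ0_pos : ∀ s, 0 < dπ0 s)
    (w f : S → ℝ) :
    γ * (∑ s, ∑ a, ∑ s', dπ0 s * π0 s a * T s a s' *
          ((w s * (π s a / π0 s a) - w s') * f s'))
      + (1 - γ) * (∑ s, d0 s * ((1 - w s) * f s))
    = ∑ s, dπ0 s * ((dπ s / dπ0 s - w s) *
        (f s - γ * ∑ s', (∑ a, π s a * T s a s') * f s')) := by
  set G : S → ℝ := fun s => ∑ s', (∑ a, π s a * T s a s') * f s' with hG
  -- pointwise rewrite of the triple-sum summand
  have hbeta : ∀ s a s', dπ0 s * π0 s a * T s a s' *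
      ((w s * (π s a / π0 s a) - w s') * f s')
      = dπ0 s * (π s a * T s a s') * (w s * f s')
        - (π0 s a * T s a s') * dπ0 s * (w s' * f s') := by
    intro s a s'
    rcases eq_or_lt_of_le (hπ0_nonneg s a) with h | h
    · have hπ : π s a = 0 := by
        by_contra hne
        have := habs s a (lt_of_le_of_ne (hπ_nonneg s a) (Ne.symm hne))
        rw [← h] at this; exact lt_irrefl 0 this
      simp [← h, hπ]
    · field_simp
  have E1 : ∑ s, ∑ a, ∑ s', dπ0 s * (π s a * T s a s') * (w s * f s')
      = ∑ s, dπ0 s * w s * G s := by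
    refine Finset.sum_congr rfl fun s _ => ?_
    rw [Finset.sum_comm, hG, Finset.mul_sum]
    refine Finset.sum_congr rfl fun s' _ => ?_
    rw [Finset.sum_mul, Finset.mul_sum]
    refine Finset.sum_congr rfl fun a _ => by ring
  have E2 : ∑ s, ∑ a, ∑ s', (π0 s a * T s a s') * dπ0 s * (w s' * f s')
      = ∑ s', (∑ s, (∑ a, π0 s a * T s a s') * dπ0 s) * (w s' * f s') := by
    have step : ∀ s : S, ∑ a, ∑ s', (π0 s a * T s a s') * dπ0 s * (w s' * f s')
        = ∑ s', ((∑ a, π0 s a * T s a s') * dπ0 s) * (w s' * f s') := by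
      intro s
      rw [Finset.sum_comm]
      refine Finset.sum_congr rfl fun s' _ => ?_
      rw [Finset.sum_mul, Finset.sum_mul]
    simp only [step]
    rw [Finset.sum_comm]
    refine Finset.sum_congr rfl fun s' _ => ?_
    rw [Finset.sum_mul]
  -- rewrite the triple sum
  have hsplit : ∑ s, ∑ a, ∑ s', dπ0 s * π0 s a * T s a s' *
      ((w s * (π s a / π0 s a) - w s') * f s')
      = ∑ s, dπ0 s * w s * G s
        - ∑ s', (∑ s, (∑ a, π0 s a * T s a s') * dπ0 s) * (w s' * f s') := by
    rw [← E1, ← E2, ← Finset.sum_sub_distrib]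
    refine Finset.sum_congr rfl fun s _ => ?_
    rw [← Finset.sum_sub_distrib]
    refine Finset.sum_congr rfl fun a _ => ?_
    rw [← Finset.sum_sub_distrib]
    exact Finset.sum_congr rfl fun s' _ => hbeta s a s'
  -- fixed point identities in summed form
  have hB : γ * ∑ s', (∑ s, (∑ a, π0 s a * T s a s') * dπ0 s) * (w s' * f s')
      = ∑ s', (dπ0 s' - (1 - γ) * d0 s') * (w s' * f s') := by
    rw [Finset.mul_sum]
    refine Finset.sum_congr rfl fun s' _ => ?_
    linear_combination (w s' * f s') * hdπ0_fix s' 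
  have hA : γ * ∑ s, dπ s * G s = ∑ s', (dπ s' - (1 - γ) * d0 s') * f s' := by
    have swap : ∑ s, dπ s * G s = ∑ s', (∑ s, (∑ a, π s a * T s a s') * dπ s) * f s' := by
      simp only [hG, Finset.mul_sum]
      rw [Finset.sum_comm]
      refine Finset.sum_congr rfl fun s' _ => ?_
      rw [Finset.sum_mul]
      refine Finset.sum_congr rfl fun s _ => by ring
    rw [swap, Finset.mul_sum]
    refine Finset.sum_congr rfl fun s' _ => ?_
    linear_combination (f s') * hdπ_fix s' 
  -- rewrite RHS
  have hRHS : ∑ s, dπ0 s * ((dπ s / dπ0 s - w s) * (f s - γ * G s))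
      = (∑ s, dπ s * f s) - γ * (∑ s, dπ s * G s)
        - (∑ s, dπ0 s * w s * f s) + γ * (∑ s, dπ0 s * w s * G s) := by
    have : ∀ s, dπ0 s * ((dπ s / dπ0 s - w s) * (f s - γ * G s))
        = dπ s * f s - γ * (dπ s * G s) - dπ0 s * w s * f s + γ * (dπ0 s * w s * G s) := by
      intro s
      have h := (hdπ0_pos s).ne'
      field_simp
      ring
    simp only [this, Finset.sum_add_distrib, Finset.sum_sub_distrib, ← Finset.mul_sum]
  rw [hsplit, hRHS, hA]
  -- decompose remaining composite sums
  have d1 : ∑ s', (dπ0 s' - (1 - γ) * d0 s') * (w s' * f s')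
      = (∑ s, dπ0 s * w s * f s) - (1 - γ) * ∑ s, d0 s * (w s * f s) := by
    rw [Finset.mul_sum, ← Finset.sum_sub_distrib]
    exact Finset.sum_congr rfl fun s _ => by ring
  have d2 : ∑ s', (dπ s' - (1 - γ) * d0 s') * f s'
      = (∑ s, dπ s * f s) - (1 - γ) * ∑ s, d0 s * f s := by
    rw [Finset.mul_sum, ← Finset.sum_sub_distrib]
    exact Finset.sum_congr rfl fun s _ => by ring
  have d3 : ∑ s, d0 s * ((1 - w s) * f s)
      = (∑ s, d0 s * f s) - ∑ s, d0 s * (w s * f s) := by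
    rw [← Finset.sum_sub_distrib]
    exact Finset.sum_congr rfl fun s _ => by ring
  rw [mul_sub, hB, d1, d2, d3]
  ring
end

section
/- (Reward-error identity) Let γ ∈ (0,1), V^π be the value function solving V^π(s) = r_π(s) + γ Σ_{s'} T_π(s'|s) V^π(s'), where r_π(s) = Σ_a π(a|s) r(s,a). Define R_π[w] = Σ_{s} d_{π₀}(s) w(s) r_π(s) and R_π = Σ_s d_π(s) r_π(s). Then L(w, V^π) = R_π − R_π[w], where L is the discounted density-ratio loss. Consequently, if ±V^π belong to a function class F, then |R_π[w] − R_π| ≤ max_{f∈F} L(w,f). -/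
/-- Reward-error identity: `L(w, Vπ) = Rπ − Rπ[w]`; consequently, if
`±Vπ ∈ F` then `|Rπ[w] − Rπ| ≤ max_{f∈F} L(w,f)`. -/
theorem stmt_8 {S A : Type*} [Fintype S] [Fintype A]
    (T : S → A → S → ℝ)
    (hTnonneg : ∀ s a s', 0 ≤ T s a s')
    (hTstoch : ∀ s a, ∑ s', T s a s' = 1)
    (π π0 : S → A → ℝ)
    (hπ_nonneg : ∀ s a, 0 ≤ π s a) (hπ_stoch : ∀ s, ∑ a, π s a = 1)
    (hπ0_nonneg : ∀ s a, 0 ≤ π0 s a) (hπ0_stoch : ∀ s, ∑ a, π0 s a = 1)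
    (habs : ∀ s a, 0 < π s a → 0 < π0 s a)
    (d0 : S → ℝ) (hd0_nonneg : ∀ s, 0 ≤ d0 s) (hd0_sum : ∑ s, d0 s = 1)
    (γ : ℝ) (hγ : γ ∈ Set.Ioo (0 : ℝ) 1)
    (dπ dπ0 : S → ℝ)
    (hdπ_fix : ∀ s', γ * (∑ s, (∑ a, π s a * T s a s') * dπ s) - dπ s'
        + (1 - γ) * d0 s' = 0)
    (hdπ0_fix : ∀ s', γ * (∑ s, (∑ a, π0 s a * T s a s') * dπ0 s) - dπ0 s'
        + (1 - γ) * d0 s' = 0)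
    (hdπ0_pos : ∀ s, 0 < dπ0 s)
    (r : S → A → ℝ)
    -- `rπ(s) = ∑_a π(a|s) r(s,a)`; `Vπ` solves the discounted Bellman equation:
    (Vπ : S → ℝ)
    (hV : ∀ s, Vπ s = (∑ a, π s a * r s a)
        + γ * ∑ s', (∑ a, π s a * T s a s') * Vπ s')
    -- the loss functional `L`:
    (L : (S → ℝ) → (S → ℝ) → ℝ)
    (hL : ∀ w f, L w f =
      γ * (∑ s, ∑ a, ∑ s', dπ0 s * π0 s a * T s a s' *
            ((w s * (π s a / π0 s a) - w s') * f s'))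
        + (1 - γ) * (∑ s, d0 s * ((1 - w s) * f s)))
    (w : S → ℝ) :
    (L w Vπ = (∑ s, dπ s * ∑ a, π s a * r s a)
        - (∑ s, dπ0 s * w s * ∑ a, π s a * r s a)) ∧
    (∀ F : Set (S → ℝ), Vπ ∈ F → (fun s => -Vπ s) ∈ F →
      BddAbove ((fun f => L w f) '' F) →
      |(∑ s, dπ0 s * w s * ∑ a, π s a * r s a)
        - (∑ s, dπ s * ∑ a, π s a * r s a)| ≤ sSup ((fun f => L w f) '' F)) := by
  classical
  -- β well-definedness: π0 * (π/π0) = π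
  have hkey : ∀ s a, π0 s a * (π s a / π0 s a) = π s a := by
    intro s a
    rcases eq_or_lt_of_le (hπ0_nonneg s a) with h | h
    · have hπ0 : π s a = 0 := by
        by_contra hne
        have hp : 0 < π s a := lt_of_le_of_ne (hπ_nonneg s a) (Ne.symm hne)
        exact absurd (habs s a hp) (by rw [← h]; exact lt_irrefl 0)
      rw [← h, hπ0]; ring
    · field_simp
  set rπ : S → ℝ := fun s => ∑ a, π s a * r s a with hrπ
  -- pointwise split of the triple-sum integrand
  have hsplit : ∀ s a s', dπ0 s * π0 s a * T s a s' * ((w s * (π s a / π0 s a) - w s') * Vπ s')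
      = dπ0 s * w s * (π s a * T s a s' * Vπ s')
        - (π0 s a * T s a s' * dπ0 s) * (w s' * Vπ s') := by
    intro s a s'
    linear_combination (dπ0 s * T s a s' * w s * Vπ s') * hkey s a
  -- eq1
  have eq1 : γ * (∑ s, ∑ a, ∑ s', dπ0 s * w s * (π s a * T s a s' * Vπ s'))
      = ∑ s, dπ0 s * w s * (Vπ s - rπ s) := by
    rw [Finset.mul_sum]
    refine Finset.sum_congr rfl fun s _ => ?_
    have h1 : ∑ a, ∑ s', π s a * T s a s' * Vπ s'
        = ∑ s', (∑ a, π s a * T s a s') * Vπ s' := by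
      rw [Finset.sum_comm]
      exact Finset.sum_congr rfl fun s' _ => by rw [Finset.sum_mul]
    have h2 : γ * ∑ s', (∑ a, π s a * T s a s') * Vπ s' = Vπ s - rπ s := by
      have := hV s; rw [hrπ]; linarith
    calc γ * ∑ a, ∑ s', dπ0 s * w s * (π s a * T s a s' * Vπ s')
        = dπ0 s * w s * (γ * ∑ a, ∑ s', π s a * T s a s' * Vπ s') := by
          simp only [Finset.mul_sum]
          exact Finset.sum_congr rfl fun a _ => Finset.sum_congr rfl fun s' _ => by ring
      _ = dπ0 s * w s * (Vπ s - rπ s) := by rw [h1, h2]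
  -- eq2
  have eq2 : γ * (∑ s, ∑ a, ∑ s', (π0 s a * T s a s' * dπ0 s) * (w s' * Vπ s'))
      = ∑ s', (dπ0 s' - (1 - γ) * d0 s') * (w s' * Vπ s') := by
    have hswap : (∑ s, ∑ a, ∑ s', (π0 s a * T s a s' * dπ0 s) * (w s' * Vπ s'))
        = ∑ s', (∑ s, (∑ a, π0 s a * T s a s') * dπ0 s) * (w s' * Vπ s') := by
      calc ∑ s, ∑ a, ∑ s', (π0 s a * T s a s' * dπ0 s) * (w s' * Vπ s')
          = ∑ s, ∑ s', ∑ a, (π0 s a * T s a s' * dπ0 s) * (w s' * Vπ s') :=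
            Finset.sum_congr rfl fun s _ => Finset.sum_comm
        _ = ∑ s', ∑ s, ∑ a, (π0 s a * T s a s' * dπ0 s) * (w s' * Vπ s') :=
            Finset.sum_comm
        _ = ∑ s', (∑ s, (∑ a, π0 s a * T s a s') * dπ0 s) * (w s' * Vπ s') := by
            refine Finset.sum_congr rfl fun s' _ => ?_
            rw [Finset.sum_mul]
            refine Finset.sum_congr rfl fun s _ => ?_
            rw [Finset.sum_mul, Finset.sum_mul]
    rw [hswap, Finset.mul_sum]
    refine Finset.sum_congr rfl fun s' _ => ?_
    have := hdπ0_fix s'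
    have h3 : γ * (∑ s, (∑ a, π0 s a * T s a s') * dπ0 s) = dπ0 s' - (1 - γ) * d0 s' := by linarith
    rw [← mul_assoc, h3]
  -- eq3 : (1-γ) ∑ d0 Vπ = ∑ dπ rπ
  have eq3 : (1 - γ) * ∑ s, d0 s * Vπ s = ∑ s, dπ s * rπ s := by
    have h4 : ∑ s, dπ s * Vπ s
        = (∑ s, dπ s * rπ s) + ∑ s', (dπ s' - (1 - γ) * d0 s') * Vπ s' := by
      calc ∑ s, dπ s * Vπ s
          = ∑ s, (dπ s * rπ s + dπ s * (γ * ∑ s', (∑ a, π s a * T s a s') * Vπ s')) := by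
            refine Finset.sum_congr rfl fun s _ => ?_
            rw [hV s]; rw [hrπ]; ring
        _ = (∑ s, dπ s * rπ s) + ∑ s, dπ s * (γ * ∑ s', (∑ a, π s a * T s a s') * Vπ s') := by
            rw [Finset.sum_add_distrib]
        _ = (∑ s, dπ s * rπ s) + ∑ s', (γ * ∑ s, (∑ a, π s a * T s a s') * dπ s) * Vπ s' := by
            congr 1
            calc ∑ s, dπ s * (γ * ∑ s', (∑ a, π s a * T s a s') * Vπ s')
                = ∑ s, ∑ s', dπ s * (γ * ((∑ a, π s a * T s a s') * Vπ s')) := by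
                  simp only [Finset.mul_sum]
              _ = ∑ s', ∑ s, dπ s * (γ * ((∑ a, π s a * T s a s') * Vπ s')) :=
                  Finset.sum_comm
              _ = ∑ s', (γ * ∑ s, (∑ a, π s a * T s a s') * dπ s) * Vπ s' := by
                  refine Finset.sum_congr rfl fun s' _ => ?_
                  rw [Finset.mul_sum, Finset.sum_mul]
                  exact Finset.sum_congr rfl fun s _ => by ring
        _ = (∑ s, dπ s * rπ s) + ∑ s', (dπ s' - (1 - γ) * d0 s') * Vπ s' := by
            congr 1
            refine Finset.sum_congr rfl fun s' _ => ?_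
            have := hdπ_fix s'
            have : γ * (∑ s, (∑ a, π s a * T s a s') * dπ s) = dπ s' - (1 - γ) * d0 s' := by linarith
            rw [this]
    have h5 : ∑ s', (dπ s' - (1 - γ) * d0 s') * Vπ s'
        = (∑ s, dπ s * Vπ s) - (1 - γ) * ∑ s, d0 s * Vπ s := by
      rw [Finset.mul_sum, ← Finset.sum_sub_distrib]
      exact Finset.sum_congr rfl fun s _ => by ring
    rw [h5] at h4; linarith
  -- main identity
  have hmain : L w Vπ = (∑ s, dπ s * rπ s) - ∑ s, dπ0 s * w s * rπ s := by
    rw [hL]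
    have hsum : (∑ s, ∑ a, ∑ s', dπ0 s * π0 s a * T s a s' *
          ((w s * (π s a / π0 s a) - w s') * Vπ s'))
        = (∑ s, ∑ a, ∑ s', dπ0 s * w s * (π s a * T s a s' * Vπ s'))
          - (∑ s, ∑ a, ∑ s', (π0 s a * T s a s' * dπ0 s) * (w s' * Vπ s')) := by
      rw [← Finset.sum_sub_distrib]
      refine Finset.sum_congr rfl fun s _ => ?_
      rw [← Finset.sum_sub_distrib]
      refine Finset.sum_congr rfl fun a _ => ?_
      rw [← Finset.sum_sub_distrib]
      exact Finset.sum_congr rfl fun s' _ => hsplit s a s'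
    rw [hsum, mul_sub, eq1, eq2]
    have e1 : ∑ s, dπ0 s * w s * (Vπ s - rπ s)
        = (∑ s, dπ0 s * w s * Vπ s) - ∑ s, dπ0 s * w s * rπ s := by
      rw [← Finset.sum_sub_distrib]; exact Finset.sum_congr rfl fun s _ => by ring
    have e2 : ∑ s', (dπ0 s' - (1 - γ) * d0 s') * (w s' * Vπ s')
        = (∑ s, dπ0 s * w s * Vπ s) - (1 - γ) * ∑ s, d0 s * (w s * Vπ s) := by
      rw [Finset.mul_sum, ← Finset.sum_sub_distrib]
      exact Finset.sum_congr rfl fun s _ => by ring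
    have e3 : (∑ s, d0 s * ((1 - w s) * Vπ s))
        = (∑ s, d0 s * Vπ s) - ∑ s, d0 s * (w s * Vπ s) := by
      rw [← Finset.sum_sub_distrib]; exact Finset.sum_congr rfl fun s _ => by ring
    rw [e1, e2, e3]
    have := eq3
    ring_nf
    linarith [eq3]
  refine ⟨hmain, ?_⟩
  intro F hVF hnVF hbdd
  have hneg : L w (fun s => -Vπ s) = -(L w Vπ) := by
    rw [hL, hL]
    simp only [mul_neg, neg_mul, Finset.sum_neg_distrib]
    ring
  have h1 : L w Vπ ≤ sSup ((fun f => L w f) '' F) :=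
    le_csSup hbdd ⟨Vπ, hVF, rfl⟩
  have h2 : L w (fun s => -Vπ s) ≤ sSup ((fun f => L w f) '' F) :=
    le_csSup hbdd ⟨(fun s => -Vπ s), hnVF, rfl⟩
  rw [hneg, hmain] at h2
  rw [hmain] at h1
  rw [abs_le]
  constructor <;> [linarith; linarith]
end

section
/- (Error lower bound via indicator discriminators) Let γ ∈ (0,1) and for each state s̃ define f_{s̃}(s) = Σ_{t=0}^∞ γ^t T_π^t(s̃|s). If the discriminator class F contains ±f_{s̃} for every state s̃, then max_{f∈F} L(w,f) ≥ max_{s̃} |d_π(s̃) − w(s̃)·d_{π₀}(s̃)|, where L(w,f) = Σ_s d_{π₀}(s)(w*(s)−w(s))·Πf(s), w*(s) = d_π(s)/d_{π₀}(s), and Πf(s) = f(s) − γ Σ_{s'}T_π(s'|s)f(s'). -/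
/-- Error lower bound via indicator discriminators: if the discriminator
class `F` contains `±f_{st}` for `f_{st}(s) = ∑_{t=0}^∞ γ^t Tπ^t(st|s)`, then
`max_{f∈F} L(w,f) ≥ max_{st} |dπ(st) − w(st) dπ0(st)|`, where
`L(w,f) = ∑_s dπ0(s)(w*(s)−w(s)) Πf(s)`, `w* = dπ/dπ0`,
`Πf(s) = f(s) − γ ∑_{s'} Tπ(s'|s) f(s')`. -/
theorem stmt_9 {S : Type*} [Fintype S] [DecidableEq S]
    (Tπ : Matrix S S ℝ)
    (hTnonneg : ∀ s s', 0 ≤ Tπ s s')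
    (hTstoch : ∀ s, ∑ s', Tπ s s' = 1)
    (γ : ℝ) (hγ : γ ∈ Set.Ioo (0 : ℝ) 1)
    (dπ dπ0 : S → ℝ)
    (hdπ0_pos : ∀ s, 0 < dπ0 s)
    (L : (S → ℝ) → (S → ℝ) → ℝ)
    (hL : ∀ w f, L w f = ∑ s, dπ0 s * ((dπ s / dπ0 s - w s) *
        (f s - γ * ∑ s', Tπ s s' * f s')))
    (fdisc : S → S → ℝ)
    (hfdisc : ∀ st s, fdisc st s = ∑' t : ℕ, γ ^ t * (Tπ ^ t) s st)
    (w : S → ℝ)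
    (F : Set (S → ℝ))
    (hFpos : ∀ st, fdisc st ∈ F)
    (hFneg : ∀ st, (fun s => -fdisc st s) ∈ F)
    (hBdd : BddAbove ((fun f => L w f) '' F)) :
    ∀ st, |dπ st - w st * dπ0 st| ≤ sSup ((fun f => L w f) '' F) := by
  intro st
  obtain ⟨hγ0, hγ1⟩ := hγ
  -- entries of Tπ^t are nonneg and rows sum to 1
  have hpow : ∀ t : ℕ, (∀ s s', 0 ≤ (Tπ ^ t) s s') ∧ (∀ s, ∑ s', (Tπ ^ t) s s' = 1) := by
    intro t
    induction t with
    | zero =>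
      constructor
      · intro s s'
        simp [Matrix.one_apply]
        split <;> norm_num
      · intro s
        simp [Matrix.one_apply]
    | succ n ih =>
      constructor
      · intro s s'
        rw [pow_succ', Matrix.mul_apply]
        exact Finset.sum_nonneg fun k _ => mul_nonneg (hTnonneg s k) (ih.1 k s')
      · intro s
        simp only [pow_succ', Matrix.mul_apply]
        rw [Finset.sum_comm]
        have : ∀ k ∈ Finset.univ, ∑ s', Tπ s k * (Tπ ^ n) k s' = Tπ s k := by
          intro k _
          rw [← Finset.mul_sum, ih.2 k, mul_one]
        rw [Finset.sum_congr rfl this, hTstoch]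
  have hentry_le : ∀ t s s', (Tπ ^ t) s s' ≤ 1 := by
    intro t s s'
    calc (Tπ ^ t) s s' ≤ ∑ s'', (Tπ ^ t) s s'' :=
          Finset.single_le_sum (fun k _ => (hpow t).1 s k) (Finset.mem_univ s')
      _ = 1 := (hpow t).2 s
  have hsum : ∀ s, Summable (fun t : ℕ => γ ^ t * (Tπ ^ t) s st) := by
    intro s
    apply Summable.of_nonneg_of_le
      (fun t => mul_nonneg (pow_nonneg hγ0.le t) ((hpow t).1 s st))
      (fun t => ?_) (summable_geometric_of_lt_one hγ0.le hγ1)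
    calc γ ^ t * (Tπ ^ t) s st ≤ γ ^ t * 1 :=
          mul_le_mul_of_nonneg_left (hentry_le t s st) (pow_nonneg hγ0.le t)
      _ = γ ^ t := mul_one _
  -- key: Π (fdisc st) s = indicator
  have hkey : ∀ s, fdisc st s - γ * ∑ s', Tπ s s' * fdisc st s' =
      (if s = st then (1:ℝ) else 0) := by
    intro s
    have h1 : γ * ∑ s', Tπ s s' * fdisc st s' =
        ∑' t : ℕ, γ ^ (t+1) * (Tπ ^ (t+1)) s st := by
      have : ∀ s', Tπ s s' * fdisc st s' = ∑' t : ℕ, Tπ s s' * (γ ^ t * (Tπ ^ t) s' st) := by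
        intro s'
        rw [hfdisc, ← tsum_mul_left]
      rw [Finset.sum_congr rfl (fun s' _ => this s'),
        ← Summable.tsum_finsetSum (fun s' _ => ((hsum s').mul_left (Tπ s s'))),
        ← tsum_mul_left]
      congr 1
      ext t
      rw [pow_succ', Finset.mul_sum, pow_succ', Matrix.mul_apply, Finset.mul_sum]
      exact Finset.sum_congr rfl fun i _ => by ring
    rw [hfdisc, h1, Summable.tsum_eq_zero_add (hsum s)]
    simp [Matrix.one_apply]
  -- value of L at fdisc st
  have hval : L w (fdisc st) = dπ st - w st * dπ0 st := by
    rw [hL]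
    rw [Finset.sum_congr rfl (fun s _ => by rw [hkey s])]
    rw [Finset.sum_eq_single st]
    · have hne : dπ0 st ≠ 0 := (hdπ0_pos st).ne'
      rw [if_pos rfl]
      field_simp
    · intro s _ hs
      rw [if_neg hs]
      ring
    · intro h
      exact absurd (Finset.mem_univ st) h
  have hvalneg : L w (fun s => -fdisc st s) = -(dπ st - w st * dπ0 st) := by
    rw [hL]
    have : ∀ s ∈ Finset.univ, dπ0 s * ((dπ s / dπ0 s - w s) *
        (-fdisc st s - γ * ∑ s', Tπ s s' * -fdisc st s')) =
        -(dπ0 s * ((dπ s / dπ0 s - w s) *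
        (fdisc st s - γ * ∑ s', Tπ s s' * fdisc st s'))) := by
      intro s _
      have hinner : ∑ s', Tπ s s' * -fdisc st s' = -∑ s', Tπ s s' * fdisc st s' := by
        simp [mul_neg]
      rw [hinner]; ring
    rw [Finset.sum_congr rfl this, Finset.sum_neg_distrib, ← hL, hval]
  have h1 : dπ st - w st * dπ0 st ≤ sSup ((fun f => L w f) '' F) := by
    rw [← hval]
    exact le_csSup hBdd ⟨fdisc st, hFpos st, rfl⟩
  have h2 : -(dπ st - w st * dπ0 st) ≤ sSup ((fun f => L w f) '' F) := by
    rw [← hvalneg]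
    exact le_csSup hBdd ⟨_, hFneg st, rfl⟩
  exact abs_le.2 ⟨by linarith, h1⟩
end

section
/- (Variance of trajectory importance weight in the circle MDP) With C = (1−ρ)/ρ, F ∼ Binomial(T+1, ρ), and W = C^{2F−(T+1)}, one has E[W²] = A_ρ^{T+1} where A_ρ = (ρ³ + (1−ρ)³)/((1−ρ)ρ), and hence Var(W) = A_ρ^{T+1} − 1. Moreover A_ρ > 1 for ρ ≠ 1/2 and A_ρ = 1 for ρ = 1/2, so the variance grows exponentially in T when ρ ≠ 1/2. -/
/-- Variance of the trajectory importance weight in the circle MDP: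
with `C = (1−ρ)/ρ`, `F ∼ Binomial(T+1, ρ)`, `W = C^(2F−(T+1))`:
`E[W²] = A_ρ^(T+1)` where `A_ρ = (ρ³+(1−ρ)³)/((1−ρ)ρ)`, hence
`Var(W) = E[W²] − E[W]² = A_ρ^(T+1) − 1`; moreover `A_ρ > 1` iff `ρ ≠ 1/2`. -/
theorem stmt_11 (ρ : ℝ) (hρ : ρ ∈ Set.Ioo (0 : ℝ) 1) (T : ℕ)
    (C : ℝ) (hC : C = (1 - ρ) / ρ)
    (A : ℝ) (hA : A = (ρ ^ 3 + (1 - ρ) ^ 3) / ((1 - ρ) * ρ))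
    (p : ℕ → ℝ)
    (hp : ∀ k, p k = (T + 1).choose k * ρ ^ k * (1 - ρ) ^ (T + 1 - k))
    (W : ℕ → ℝ) (hW : ∀ k, W k = C ^ (2 * (k : ℤ) - (T + 1))) :
    -- second moment:
    (∑ k ∈ Finset.range (T + 2), p k * (W k) ^ 2 = A ^ (T + 1)) ∧
    -- variance (using E[W] = 1):
    (∑ k ∈ Finset.range (T + 2), p k * (W k) ^ 2
        - (∑ k ∈ Finset.range (T + 2), p k * W k) ^ 2 = A ^ (T + 1) - 1) ∧
    (ρ ≠ 1 / 2 → 1 < A) ∧ (ρ = 1 / 2 → A = 1) := by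
  obtain ⟨h0, h1⟩ := hρ
  have hρ0 : ρ ≠ 0 := ne_of_gt h0
  have h1ρ : (0:ℝ) < 1 - ρ := by linarith
  have h1ρ0 : (1:ℝ) - ρ ≠ 0 := ne_of_gt h1ρ
  have hCpos : 0 < C := by rw [hC]; positivity
  have hC0 : C ≠ 0 := ne_of_gt hCpos
  have hWk : ∀ k : ℕ, W k = C ^ (2*k) / C ^ (T+1) := by
    intro k
    rw [hW, show (2*(k:ℤ) - (T+1)) = ((2*k : ℕ) : ℤ) - (((T+1 : ℕ)) : ℤ) by push_cast; ring,
      zpow_sub₀ hC0, zpow_natCast, zpow_natCast]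
  have e2 : ∑ k ∈ Finset.range (T + 2), p k * (W k) ^ 2
      = (ρ * C^4 + (1-ρ)) ^ (T+1) / (C^2) ^ (T+1) := by
    rw [Finset.sum_congr rfl (fun k _ => ?_), ← Finset.sum_div, ← add_pow]
    rw [hp, hWk, div_pow, ← pow_mul, ← pow_mul, mul_pow, ← pow_mul, ← pow_mul]
    field_simp
    ring
  have e1 : ∑ k ∈ Finset.range (T + 2), p k * W k
      = (ρ * C^2 + (1-ρ)) ^ (T+1) / C ^ (T+1) := by
    rw [Finset.sum_congr rfl (fun k _ => ?_), ← Finset.sum_div, ← add_pow]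
    rw [hp, hWk, mul_pow, ← pow_mul]
    field_simp
  have base1 : ρ * C^2 + (1-ρ) = C := by
    subst hC; field_simp; ring
  have base2 : ρ * C^4 + (1-ρ) = A * C^2 := by
    subst hC hA; field_simp; ring
  have hm2 : ∑ k ∈ Finset.range (T + 2), p k * (W k) ^ 2 = A ^ (T+1) := by
    rw [e2, base2, mul_pow, mul_div_assoc, div_self (by positivity), mul_one]
  have hm1 : ∑ k ∈ Finset.range (T + 2), p k * W k = 1 := by
    rw [e1, base1, div_self (by positivity)]
  refine ⟨hm2, by rw [hm2, hm1]; ring, fun hne => ?_, fun he => by rw [hA, he]; norm_num⟩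
  rw [hA]
  rw [one_lt_div (by positivity)]
  have h2 : (1 - 2*ρ) ≠ 0 := fun h => hne (by linarith)
  nlinarith [sq_pos_of_ne_zero h2]
end

section
/- (First cross moment) With the same setup, E[W²R] = ((1−ρ)²/ρ)·A_ρ^T, where R = F/(T+1), W = C^{2F−(T+1)}, C = (1−ρ)/ρ, F ∼ Binomial(T+1,ρ), and A_ρ = (ρ³+(1−ρ)³)/((1−ρ)ρ). -/
/-- First cross moment in the circle MDP: with the same setup,
`E[W²R] = ((1−ρ)²/ρ) · A_ρ^T`. -/
theorem stmt_13 (ρ : ℝ) (hρ : ρ ∈ Set.Ioo (0 : ℝ) 1) (T : ℕ)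
    (C : ℝ) (hC : C = (1 - ρ) / ρ)
    (A : ℝ) (hA : A = (ρ ^ 3 + (1 - ρ) ^ 3) / ((1 - ρ) * ρ))
    (p : ℕ → ℝ)
    (hp : ∀ k, p k = (T + 1).choose k * ρ ^ k * (1 - ρ) ^ (T + 1 - k))
    (W : ℕ → ℝ) (hW : ∀ k, W k = C ^ (2 * (k : ℤ) - (T + 1)))
    (R : ℕ → ℝ) (hR : ∀ k, R k = (k : ℝ) / (T + 1)) :
    ∑ k ∈ Finset.range (T + 2), p k * (W k) ^ 2 * R k
      = ((1 - ρ) ^ 2 / ρ) * A ^ T := by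
  obtain ⟨h0, h1⟩ := hρ
  have h1ρ : (0:ℝ) < 1 - ρ := by linarith
  have hC0 : 0 < C := by rw [hC]; positivity
  have hCne : C ≠ 0 := ne_of_gt hC0
  have hT1 : ((T:ℝ) + 1) ≠ 0 := by positivity
  have hρC : ρ * C ^ 2 = (1 - ρ) ^ 2 / ρ := by
    rw [hC]; field_simp
  have hAC : ρ * C ^ 4 + (1 - ρ) = A * C ^ 2 := by
    rw [hA, hC]; field_simp; ring
  have key : ∀ j ∈ Finset.range (T+1),
      p (j+1) * W (j+1) ^ 2 * R (j+1)
        = ((1-ρ)^2/ρ * ((C^2)^T)⁻¹) * ((ρ*C^4)^j * (1-ρ)^(T-j) * T.choose j) := by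
    intro j hj
    rw [hp, hW, hR]
    have hch : ((T + 1).choose (j+1) : ℝ) * ((j+1) / (T+1)) = T.choose j := by
      have h := Nat.add_one_mul_choose_eq T j
      have h' : ((T:ℝ)+1) * T.choose j = ((T+1).choose (j+1)) * ((j:ℝ)+1) := by
        exact_mod_cast congrArg (Nat.cast : ℕ → ℝ) h
      field_simp
      linarith [h']
    have hZ : ((C:ℝ)^2)^T ≠ 0 := by positivity
    have key2 : (C ^ (2 * ((j:ℤ)+1) - ((T:ℤ) + 1))) ^ 2 * ((C^2)^T)
        = (C^4)^j * C^2 := by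
      have l : ((C:ℝ)^2)^T = C ^ ((2*T : ℕ)) := by rw [← pow_mul]
      have r : ((C:ℝ)^4)^j * C^2 = C ^ ((4*j+2 : ℕ)) := by
        rw [pow_add, pow_mul]
      rw [l, r, ← zpow_natCast C (2*T), ← zpow_natCast C (4*j+2),
        ← zpow_natCast (C ^ (2 * ((j:ℤ)+1) - ((T:ℤ) + 1))) 2,
        ← zpow_mul, ← zpow_add₀ hCne]
      congr 1
      push_cast
      ring
    have hWsq : (C ^ (2 * ((j:ℤ)+1) - ((T:ℤ) + 1))) ^ 2
        = (C^4)^j * C^2 * ((C^2)^T)⁻¹ := by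
      field_simp
      linarith [key2]
    push_cast
    rw [hWsq]
    calc ((T + 1).choose (j+1) : ℝ) * ρ ^ (j+1) * (1-ρ) ^ (T-j)
          * ((C^4)^j * C^2 * ((C^2)^T)⁻¹) * ((j+1) / (T+1))
        = (((T + 1).choose (j+1) : ℝ) * ((j+1) / (T+1)))
          * ((ρ * C^2) * (ρ^j * (1-ρ)^(T-j) * (C^4)^j * ((C^2)^T)⁻¹)) := by ring
      _ = ((1-ρ)^2/ρ * ((C^2)^T)⁻¹) * ((ρ*C^4)^j * (1-ρ)^(T-j) * T.choose j) := by
          rw [hch, hρC, mul_pow]; ring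
  rw [Finset.sum_range_succ', Finset.sum_congr rfl key, ← Finset.mul_sum]
  have h0term : p 0 * W 0 ^ 2 * R 0 = 0 := by simp [hR]
  rw [h0term, add_zero]
  have hbin : ∑ j ∈ Finset.range (T+1), (ρ*C^4)^j * (1-ρ)^(T-j) * (T.choose j : ℝ)
      = (ρ*C^4 + (1-ρ))^T := (add_pow (ρ*C^4) (1-ρ) T).symm
  rw [hbin, hAC, mul_pow]
  field_simp
end

section
/- (Rao-Blackwellization of importance weights / step-wise IS) Under the setup of trajectory importance sampling, E_{τ∼p_{π₀}}[w_{0:T}(τ) | τ_{0:t}] = w_{0:t}(τ) := Π_{k=0}^t π(a_k|s_k)/π₀(a_k|s_k), and consequently E_{τ∼p_{π₀}}[w_{0:T}(τ)·r_t] = E_{τ∼p_{π₀}}[w_{0:t}(τ)·r_t] for any reward r_t that is a function of τ_{0:t}. -/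
lemma sum_snoc' {S M : Type*} [Fintype S] [AddCommMonoid M] {n : ℕ}
    (F : (Fin (n+1) → S) → M) :
    ∑ f : Fin (n+1) → S, F f = ∑ g : Fin n → S, ∑ s : S, F (Fin.snoc g s) := by
  calc ∑ f : Fin (n+1) → S, F f
      = ∑ p : S × (Fin n → S), F (Fin.snoc p.2 p.1) :=
        Fintype.sum_equiv (Fin.snocEquiv fun _ => S).symm _ _
          (fun f => by simp [Fin.snocEquiv])
    _ = ∑ s : S, ∑ g : Fin n → S, F (Fin.snoc g s) := Fintype.sum_prod_type _
    _ = ∑ g : Fin n → S, ∑ s : S, F (Fin.snoc g s) := Finset.sum_comm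

lemma sum_snoc2 {S A M : Type*} [Fintype S] [Fintype A] [AddCommMonoid M] {n : ℕ}
    (F : (Fin (n+1) → S) × (Fin (n+1) → A) → M) :
    ∑ τ : (Fin (n+1) → S) × (Fin (n+1) → A), F τ
      = ∑ g : Fin n → S, ∑ y : Fin n → A, ∑ s : S, ∑ a : A, F (Fin.snoc g s, Fin.snoc y a) := by
  rw [Fintype.sum_prod_type]
  rw [sum_snoc' (fun x => ∑ y : Fin (n+1) → A, F (x, y))]
  refine Finset.sum_congr rfl (fun g _ => ?_)
  rw [Finset.sum_congr rfl (fun s _ => sum_snoc' (fun y => F (Fin.snoc g s, y)))]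
  exact Finset.sum_comm

lemma marg_aux {S A : Type*} [Fintype S] [Fintype A] [DecidableEq S] [DecidableEq A]
    (Tker : S → A → S → ℝ) (hT : ∀ s a, ∑ s', Tker s a s' = 1)
    (P : S → A → ℝ) (hP : ∀ s, ∑ a, P s a = 1)
    (d0 : S → ℝ) (t : ℕ) :
    ∀ (T : ℕ) (htT : t ≤ T) (σ : (Fin (t+1) → S) × (Fin (t+1) → A)),
      ∑ τ : (Fin (T+1) → S) × (Fin (T+1) → A),
        (if (fun k => τ.1 (Fin.castLE (Nat.succ_le_succ htT) k)) = σ.1 ∧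
            (fun k => τ.2 (Fin.castLE (Nat.succ_le_succ htT) k)) = σ.2 then
          d0 (τ.1 0) * (∏ k : Fin (T+1), P (τ.1 k) (τ.2 k)) *
            ∏ k : Fin T, Tker (τ.1 k.castSucc) (τ.2 k.castSucc) (τ.1 k.succ)
        else 0)
      = d0 (σ.1 0) * (∏ k : Fin (t+1), P (σ.1 k) (σ.2 k)) *
          ∏ k : Fin t, Tker (σ.1 k.castSucc) (σ.2 k.castSucc) (σ.1 k.succ) := by
  intro T htT
  induction T, htT using Nat.le_induction with
  | base =>
    intro σ
    have hcast : ∀ k : Fin (t+1), Fin.castLE (by omega : t+1 ≤ t+1) k = k := by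
      intro k; ext; simp
    simp only [hcast]
    rw [Fintype.sum_eq_single σ]
    · simp
    · intro τ hτ
      rw [if_neg]
      intro ⟨h1, h2⟩
      exact hτ (Prod.ext (by funext k; exact congrFun h1 k) (by funext k; exact congrFun h2 k))
  | succ T hTle IH =>
    intro σ
    have h1 : t + 1 ≤ T + 1 := by omega
    have h0S : ∀ (g : Fin (T+1) → S) (s' : S), (Fin.snoc g s' : Fin (T+2) → S) 0 = g 0 := by
      intro g s'; rw [← Fin.castSucc_zero, Fin.snoc_castSucc]
    have hck : ∀ (g : Fin (T+1) → S) (s' : S) (k : Fin (t+1)),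
        (Fin.snoc g s' : Fin (T+2) → S) (Fin.castLE (by omega) k) = g (Fin.castLE h1 k) := by
      intro g s' k
      have : (Fin.castLE (by omega : t+1 ≤ T+2) k) = Fin.castSucc (Fin.castLE h1 k) := rfl
      rw [this, Fin.snoc_castSucc]
    have hckA : ∀ (g : Fin (T+1) → A) (s' : A) (k : Fin (t+1)),
        (Fin.snoc g s' : Fin (T+2) → A) (Fin.castLE (by omega) k) = g (Fin.castLE h1 k) := by
      intro g s' k
      have : (Fin.castLE (by omega : t+1 ≤ T+2) k) = Fin.castSucc (Fin.castLE h1 k) := rfl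
      rw [this, Fin.snoc_castSucc]
    rw [sum_snoc2]
    rw [← IH σ, Fintype.sum_prod_type]
    refine Finset.sum_congr rfl (fun g _ => ?_)
    refine Finset.sum_congr rfl (fun y _ => ?_)
    have key : ∀ s' : S,
        (∑ a' : A, (if (fun k => (Fin.snoc g s' : Fin (T+2) → S) (Fin.castLE (by omega) k)) = σ.1 ∧
            (fun k => (Fin.snoc y a' : Fin (T+2) → A) (Fin.castLE (by omega) k)) = σ.2 then
          d0 ((Fin.snoc g s' : Fin (T+2) → S) 0) *
            (∏ k : Fin (T+2), P ((Fin.snoc g s' : Fin (T+2) → S) k) ((Fin.snoc y a' : Fin (T+2) → A) k)) *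
            ∏ k : Fin (T+1), Tker ((Fin.snoc g s' : Fin (T+2) → S) k.castSucc)
              ((Fin.snoc y a' : Fin (T+2) → A) k.castSucc) ((Fin.snoc g s' : Fin (T+2) → S) k.succ)
          else 0))
        = (if (fun k => g (Fin.castLE h1 k)) = σ.1 ∧ (fun k => y (Fin.castLE h1 k)) = σ.2 then
            d0 (g 0) * (∏ k : Fin (T+1), P (g k) (y k)) *
              (∏ k : Fin T, Tker (g k.castSucc) (y k.castSucc) (g k.succ)) *
              (Tker (g (Fin.last T)) (y (Fin.last T)) s') else 0) := by
      intro s'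
      simp only [hck, hckA, h0S]
      by_cases hc : (fun k => g (Fin.castLE h1 k)) = σ.1 ∧ (fun k => y (Fin.castLE h1 k)) = σ.2
      · simp only [if_pos hc]
        have hprodP : ∀ a' : A,
            (∏ k : Fin (T+2), P ((Fin.snoc g s' : Fin (T+2) → S) k) ((Fin.snoc y a' : Fin (T+2) → A) k))
              = (∏ k : Fin (T+1), P (g k) (y k)) * P s' a' := by
          intro a'
          rw [Fin.prod_univ_castSucc]
          simp [Fin.snoc_castSucc, Fin.snoc_last]
        have hprodT : ∀ a' : A,
            (∏ k : Fin (T+1), Tker ((Fin.snoc g s' : Fin (T+2) → S) k.castSucc)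
              ((Fin.snoc y a' : Fin (T+2) → A) k.castSucc) ((Fin.snoc g s' : Fin (T+2) → S) k.succ))
              = (∏ k : Fin T, Tker (g k.castSucc) (y k.castSucc) (g k.succ)) *
                  Tker (g (Fin.last T)) (y (Fin.last T)) s' := by
          intro a'
          rw [Fin.prod_univ_castSucc]
          simp [Fin.snoc_castSucc, Fin.snoc_last, Fin.succ_castSucc, Fin.succ_last, -Fin.castSucc_succ]
        simp only [hprodP, hprodT]
        have : ∀ a' : A, d0 (g 0) * ((∏ k : Fin (T+1), P (g k) (y k)) * P s' a') *
            ((∏ k : Fin T, Tker (g k.castSucc) (y k.castSucc) (g k.succ)) *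
              Tker (g (Fin.last T)) (y (Fin.last T)) s')
            = (d0 (g 0) * (∏ k : Fin (T+1), P (g k) (y k)) *
              (∏ k : Fin T, Tker (g k.castSucc) (y k.castSucc) (g k.succ)) *
              Tker (g (Fin.last T)) (y (Fin.last T)) s') * P s' a' := by
          intro a'; ring
        rw [Finset.sum_congr rfl (fun a' _ => this a'), ← Finset.mul_sum, hP s', mul_one]
      · simp only [if_neg hc, Finset.sum_const_zero]
    rw [Finset.sum_congr rfl (fun s' _ => key s')]
    by_cases hc : (fun k => g (Fin.castLE h1 k)) = σ.1 ∧ (fun k => y (Fin.castLE h1 k)) = σ.2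
    · simp only [if_pos hc, ← Finset.mul_sum, hT, mul_one]
    · simp only [if_neg hc, Finset.sum_const_zero]

/-- Rao-Blackwellization of importance weights / step-wise IS:
`E_{τ∼p_{π₀}}[w_{0:T}(τ) | τ_{0:t}] = w_{0:t}(τ)`, and consequently
`E_{τ∼p_{π₀}}[w_{0:T}(τ) r_t] = E_{τ∼p_{π₀}}[w_{0:t}(τ) r_t]` for any reward `r_t`
that is a function of the prefix `τ_{0:t}`. -/
theorem stmt_15 {S A : Type*} [Fintype S] [Fintype A] [DecidableEq S] [DecidableEq A]
    (Tker : S → A → S → ℝ)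
    (hTnonneg : ∀ s a s', 0 ≤ Tker s a s')
    (hTstoch : ∀ s a, ∑ s', Tker s a s' = 1)
    (π π0 : S → A → ℝ)
    (hπ_nonneg : ∀ s a, 0 ≤ π s a) (hπ_stoch : ∀ s, ∑ a, π s a = 1)
    (hπ0_nonneg : ∀ s a, 0 ≤ π0 s a) (hπ0_stoch : ∀ s, ∑ a, π0 s a = 1)
    (habs : ∀ s a, 0 < π s a → 0 < π0 s a)
    (d0 : S → ℝ) (hd0_nonneg : ∀ s, 0 ≤ d0 s) (hd0_sum : ∑ s, d0 s = 1)
    (t T : ℕ) (htT : t ≤ T)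
    (pπ0 : (Fin (T + 1) → S) × (Fin (T + 1) → A) → ℝ)
    (hpπ0 : ∀ τ, pπ0 τ = d0 (τ.1 0) * (∏ k : Fin (T + 1), π0 (τ.1 k) (τ.2 k)) *
      ∏ k : Fin T, Tker (τ.1 k.castSucc) (τ.2 k.castSucc) (τ.1 k.succ))
    (w0T : (Fin (T + 1) → S) × (Fin (T + 1) → A) → ℝ)
    (hw0T : ∀ τ, w0T τ = ∏ k : Fin (T + 1), π (τ.1 k) (τ.2 k) / π0 (τ.1 k) (τ.2 k))
    (w0t : (Fin (T + 1) → S) × (Fin (T + 1) → A) → ℝ)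
    (hw0t : ∀ τ, w0t τ = ∏ k : Fin (t + 1),
      π (τ.1 (Fin.castLE (by omega) k)) (τ.2 (Fin.castLE (by omega) k)) /
        π0 (τ.1 (Fin.castLE (by omega) k)) (τ.2 (Fin.castLE (by omega) k)))
    (pre : (Fin (T + 1) → S) × (Fin (T + 1) → A) →
      (Fin (t + 1) → S) × (Fin (t + 1) → A))
    (hpre : ∀ τ, pre τ = (fun k => τ.1 (Fin.castLE (by omega) k),
                          fun k => τ.2 (Fin.castLE (by omega) k))) :
    -- conditional expectation of `w_{0:T}` given the prefix `τ_{0:t}` equals `w_{0:t}`: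
    (∀ σ : (Fin (t + 1) → S) × (Fin (t + 1) → A),
      ∑ τ ∈ Finset.univ.filter (fun τ => pre τ = σ), pπ0 τ * w0T τ
        = (∏ k : Fin (t + 1), π (σ.1 k) (σ.2 k) / π0 (σ.1 k) (σ.2 k)) *
            ∑ τ ∈ Finset.univ.filter (fun τ => pre τ = σ), pπ0 τ) ∧
    -- consequence: step-wise IS is unbiased for any reward depending on the prefix:
    (∀ r : (Fin (t + 1) → S) × (Fin (t + 1) → A) → ℝ,
      ∑ τ : (Fin (T + 1) → S) × (Fin (T + 1) → A), pπ0 τ * w0T τ * r (pre τ)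
        = ∑ τ : (Fin (T + 1) → S) × (Fin (T + 1) → A), pπ0 τ * w0t τ * r (pre τ)) := by
  have h1 : t + 1 ≤ T + 1 := by omega
  -- pointwise cancellation
  have key : ∀ s a, π0 s a * (π s a / π0 s a) = π s a := by
    intro s a
    rcases eq_or_lt_of_le (hπ0_nonneg s a) with h | h
    · have hπ0z : π0 s a = 0 := h.symm
      have hπz : π s a = 0 := by
        by_contra hne
        have := habs s a (lt_of_le_of_ne (hπ_nonneg s a) (Ne.symm hne))
        rw [hπ0z] at this; exact lt_irrefl 0 this
      simp [hπ0z, hπz]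
    · field_simp
  -- pπ0 * w0T is the trajectory probability under π
  have hprod : ∀ τ : (Fin (T + 1) → S) × (Fin (T + 1) → A),
      pπ0 τ * w0T τ = d0 (τ.1 0) * (∏ k : Fin (T + 1), π (τ.1 k) (τ.2 k)) *
        ∏ k : Fin T, Tker (τ.1 k.castSucc) (τ.2 k.castSucc) (τ.1 k.succ) := by
    intro τ
    rw [hpπ0 τ, hw0T τ]
    have : (∏ k : Fin (T + 1), π0 (τ.1 k) (τ.2 k)) *
        (∏ k : Fin (T + 1), π (τ.1 k) (τ.2 k) / π0 (τ.1 k) (τ.2 k))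
        = ∏ k : Fin (T + 1), π (τ.1 k) (τ.2 k) := by
      rw [← Finset.prod_mul_distrib]
      exact Finset.prod_congr rfl (fun k _ => key _ _)
    calc d0 (τ.1 0) * (∏ k : Fin (T + 1), π0 (τ.1 k) (τ.2 k)) *
          (∏ k : Fin T, Tker (τ.1 k.castSucc) (τ.2 k.castSucc) (τ.1 k.succ)) *
          (∏ k : Fin (T + 1), π (τ.1 k) (τ.2 k) / π0 (τ.1 k) (τ.2 k))
        = d0 (τ.1 0) * ((∏ k : Fin (T + 1), π0 (τ.1 k) (τ.2 k)) *
            (∏ k : Fin (T + 1), π (τ.1 k) (τ.2 k) / π0 (τ.1 k) (τ.2 k))) *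
            (∏ k : Fin T, Tker (τ.1 k.castSucc) (τ.2 k.castSucc) (τ.1 k.succ)) := by ring
      _ = _ := by rw [this]
  -- fiber sums as indicator sums
  have hfiber : ∀ (σ : (Fin (t + 1) → S) × (Fin (t + 1) → A))
      (f : (Fin (T + 1) → S) × (Fin (T + 1) → A) → ℝ),
      ∑ τ ∈ Finset.univ.filter (fun τ => pre τ = σ), f τ
        = ∑ τ : (Fin (T + 1) → S) × (Fin (T + 1) → A),
            (if (fun k => τ.1 (Fin.castLE (by omega : t+1 ≤ T+1) k)) = σ.1 ∧
                (fun k => τ.2 (Fin.castLE (by omega : t+1 ≤ T+1) k)) = σ.2 then f τ else 0) := by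
    intro σ f
    rw [Finset.sum_filter]
    refine Finset.sum_congr rfl (fun τ _ => ?_)
    simp only [hpre, Prod.mk.injEq, Prod.ext_iff]
  -- the two marginalizations
  have margπ := marg_aux Tker hTstoch π hπ_stoch d0 t T htT
  have margπ0 := marg_aux Tker hTstoch π0 hπ0_stoch d0 t T htT
  have c1 : ∀ σ : (Fin (t + 1) → S) × (Fin (t + 1) → A),
      ∑ τ ∈ Finset.univ.filter (fun τ => pre τ = σ), pπ0 τ * w0T τ
        = (∏ k : Fin (t + 1), π (σ.1 k) (σ.2 k) / π0 (σ.1 k) (σ.2 k)) *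
            ∑ τ ∈ Finset.univ.filter (fun τ => pre τ = σ), pπ0 τ := by
    intro σ
    rw [hfiber σ (fun τ => pπ0 τ * w0T τ), hfiber σ pπ0]
    have lhs_eq : ∑ τ : (Fin (T + 1) → S) × (Fin (T + 1) → A),
        (if (fun k => τ.1 (Fin.castLE (by omega : t+1 ≤ T+1) k)) = σ.1 ∧
            (fun k => τ.2 (Fin.castLE (by omega : t+1 ≤ T+1) k)) = σ.2 then pπ0 τ * w0T τ else 0)
        = d0 (σ.1 0) * (∏ k : Fin (t+1), π (σ.1 k) (σ.2 k)) *
            ∏ k : Fin t, Tker (σ.1 k.castSucc) (σ.2 k.castSucc) (σ.1 k.succ) := by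
      rw [← margπ σ]
      refine Finset.sum_congr rfl (fun τ _ => ?_)
      by_cases hc : (fun k => τ.1 (Fin.castLE (by omega : t+1 ≤ T+1) k)) = σ.1 ∧
          (fun k => τ.2 (Fin.castLE (by omega : t+1 ≤ T+1) k)) = σ.2
      · rw [if_pos hc, if_pos hc, hprod τ]
      · rw [if_neg hc, if_neg hc]
    have rhs_eq : ∑ τ : (Fin (T + 1) → S) × (Fin (T + 1) → A),
        (if (fun k => τ.1 (Fin.castLE (by omega : t+1 ≤ T+1) k)) = σ.1 ∧
            (fun k => τ.2 (Fin.castLE (by omega : t+1 ≤ T+1) k)) = σ.2 then pπ0 τ else 0)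
        = d0 (σ.1 0) * (∏ k : Fin (t+1), π0 (σ.1 k) (σ.2 k)) *
            ∏ k : Fin t, Tker (σ.1 k.castSucc) (σ.2 k.castSucc) (σ.1 k.succ) := by
      rw [← margπ0 σ]
      refine Finset.sum_congr rfl (fun τ _ => ?_)
      by_cases hc : (fun k => τ.1 (Fin.castLE (by omega : t+1 ≤ T+1) k)) = σ.1 ∧
          (fun k => τ.2 (Fin.castLE (by omega : t+1 ≤ T+1) k)) = σ.2
      · rw [if_pos hc, if_pos hc, hpπ0 τ]
      · rw [if_neg hc, if_neg hc]
    rw [lhs_eq, rhs_eq]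
    have : (∏ k : Fin (t + 1), π (σ.1 k) (σ.2 k) / π0 (σ.1 k) (σ.2 k)) *
        (d0 (σ.1 0) * (∏ k : Fin (t+1), π0 (σ.1 k) (σ.2 k)) *
          ∏ k : Fin t, Tker (σ.1 k.castSucc) (σ.2 k.castSucc) (σ.1 k.succ))
        = d0 (σ.1 0) * ((∏ k : Fin (t+1), π0 (σ.1 k) (σ.2 k)) *
            (∏ k : Fin (t + 1), π (σ.1 k) (σ.2 k) / π0 (σ.1 k) (σ.2 k))) *
          ∏ k : Fin t, Tker (σ.1 k.castSucc) (σ.2 k.castSucc) (σ.1 k.succ) := by ring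
    rw [this, ← Finset.prod_mul_distrib, Finset.prod_congr rfl (fun k _ => key (σ.1 k) (σ.2 k))]
  refine ⟨c1, ?_⟩
  intro r
  have hw0t' : ∀ τ, w0t τ = ∏ k : Fin (t + 1),
      π ((pre τ).1 k) ((pre τ).2 k) / π0 ((pre τ).1 k) ((pre τ).2 k) := by
    intro τ; rw [hw0t τ, hpre τ]
  have hfw : ∀ (f : (Fin (T + 1) → S) × (Fin (T + 1) → A) → ℝ),
      ∑ τ : (Fin (T + 1) → S) × (Fin (T + 1) → A), f τ
        = ∑ σ : (Fin (t + 1) → S) × (Fin (t + 1) → A),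
            ∑ τ ∈ Finset.univ.filter (fun τ => pre τ = σ), f τ := by
    intro f
    rw [Finset.sum_fiberwise_eq_sum_filter Finset.univ Finset.univ pre f]
    simp
  rw [hfw (fun τ => pπ0 τ * w0T τ * r (pre τ)), hfw (fun τ => pπ0 τ * w0t τ * r (pre τ))]
  refine Finset.sum_congr rfl (fun σ _ => ?_)
  have hmemL : ∀ τ ∈ Finset.univ.filter (fun τ => pre τ = σ),
      pπ0 τ * w0T τ * r (pre τ) = pπ0 τ * w0T τ * r σ := by
    intro τ hτ
    rw [(Finset.mem_filter.mp hτ).2]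
  have hmemR : ∀ τ ∈ Finset.univ.filter (fun τ => pre τ = σ),
      pπ0 τ * w0t τ * r (pre τ)
        = pπ0 τ * ((∏ k : Fin (t + 1), π (σ.1 k) (σ.2 k) / π0 (σ.1 k) (σ.2 k)) * r σ) := by
    intro τ hτ
    have hp : pre τ = σ := (Finset.mem_filter.mp hτ).2
    rw [hw0t' τ, hp]; ring
  rw [Finset.sum_congr rfl hmemL, Finset.sum_congr rfl hmemR,
    ← Finset.sum_mul, c1 σ, ← Finset.sum_mul]
  ring
end

section
/- (RKHS mini-max closed form) Let H be an RKHS on a finite set S with positive-definite kernel k, F = {f ∈ H : ‖f‖_H ≤ 1}, and let μ be a probability distribution over triples (s,a,s'). Define L(w,f) = E_{(s,a,s')∼μ}[Δ(w;s,a,s')·f(s')] where Δ(w;s,a,s') = w(s)β(a|s) − w(s'). Then max_{f∈F} L(w,f)² = E[Δ(w;s,a,s')·Δ(w;s̄,ā,s̄')·k(s',s̄')] where (s,a,s') and (s̄,ā,s̄') are independent draws from μ. -/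
open Matrix in
/-- RKHS mini-max closed form: On a finite set `S` with positive-definite
kernel `K`, the RKHS norm of `f : S → ℝ` is `‖f‖²_H = fᵀ K⁻¹ f`, and `F` is the unit
ball. For `L(w,f) = E_{(s,a,s')∼μ}[Del(w;s,a,s') f(s')]` with
`Del(w;s,a,s') = w(s)β(a|s) − w(s')`, the maximum of `L(w,f)²` over `F` equals
`E[Del(w;s,a,s')Del(w;s̄,ā,s̄') k(s',s̄')]` over independent draws. -/
theorem stmt_17 {S A : Type*} [Fintype S] [Fintype A] [DecidableEq S]
    (K : Matrix S S ℝ) (hK : K.PosDef)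
    (μ : S × A × S → ℝ)
    (hμ_nonneg : ∀ p, 0 ≤ μ p) (hμ_sum : ∑ p, μ p = 1)
    (β : A → S → ℝ) (w : S → ℝ)
    (Del : S × A × S → ℝ)
    (hDel : ∀ p, Del p = w p.1 * β p.2.1 p.1 - w p.2.2)
    (L : (S → ℝ) → ℝ)
    (hL : ∀ f, L f = ∑ p, μ p * (Del p * f p.2.2)) :
    IsGreatest {y : ℝ | ∃ f : S → ℝ, dotProduct f (Matrix.mulVec K⁻¹ f) ≤ 1 ∧ y = (L f) ^ 2}
      (∑ p, ∑ q, μ p * μ q * (Del p * Del q * K p.2.2 q.2.2)) := by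
  classical
  set φ : S → ℝ := fun s => ∑ p, μ p * Del p * (if p.2.2 = s then 1 else 0) with hφ
  have hdot : ∀ f : S → ℝ, φ ⬝ᵥ f = ∑ p, μ p * Del p * f p.2.2 := by
    intro f
    simp only [dotProduct, hφ, Finset.sum_mul, ite_mul, one_mul, zero_mul]
    rw [Finset.sum_comm]
    refine Finset.sum_congr rfl fun p _ => ?_
    simp [mul_assoc]
  have hLf : ∀ f : S → ℝ, L f = φ ⬝ᵥ f := by
    intro f; rw [hL, hdot]; exact Finset.sum_congr rfl fun p _ => by ring
  set M : Matrix S S ℝ := K⁻¹ with hM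
  set u : S → ℝ := K *ᵥ φ with hu
  set c : ℝ := φ ⬝ᵥ (K *ᵥ φ) with hc
  have hMK : M * K = 1 := Matrix.nonsing_inv_mul K hK.det_pos.ne'.isUnit
  have hKM : K * M = 1 := Matrix.mul_nonsing_inv K hK.det_pos.ne'.isUnit
  have hMsymm : Mᵀ = M := by
    have := (hK.inv).isHermitian
    simpa [Matrix.IsHermitian] using this
  -- target equals c
  have htarget : (∑ p, ∑ q, μ p * μ q * (Del p * Del q * K p.2.2 q.2.2)) = c := by
    rw [hc, hdot (K *ᵥ φ)]
    refine Finset.sum_congr rfl fun p _ => ?_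
    have : (K *ᵥ φ) p.2.2 = ∑ q, μ q * Del q * K p.2.2 q.2.2 := by
      have := hdot (fun t => K p.2.2 t)
      rw [← this]
      simp [Matrix.mulVec, dotProduct, mul_comm]
    rw [this, Finset.mul_sum]
    exact Finset.sum_congr rfl fun q _ => by ring
  -- M *ᵥ u = φ
  have hMu : M *ᵥ u = φ := by
    rw [hu, Matrix.mulVec_mulVec, hMK, Matrix.one_mulVec]
  have hBfu : ∀ f : S → ℝ, f ⬝ᵥ (M *ᵥ u) = φ ⬝ᵥ f := by
    intro f; rw [hMu, dotProduct_comm]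
  have hBuf : ∀ f : S → ℝ, u ⬝ᵥ (M *ᵥ f) = φ ⬝ᵥ f := by
    intro f
    rw [Matrix.dotProduct_mulVec, show u ᵥ* M = φ from by rw [← hMsymm, Matrix.vecMul_transpose, hMu]]
  have hBuu : u ⬝ᵥ (M *ᵥ u) = c := by rw [hMu, dotProduct_comm, hc, hu]
  have key : ∀ f : S → ℝ, f ⬝ᵥ (M *ᵥ f) ≤ 1 → (φ ⬝ᵥ f) ^ 2 ≤ c := by
    intro f hf
    by_cases hφ0 : φ = 0
    · simp [hφ0, hc]
    have hcpos : 0 < c := by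
      have := hK.dotProduct_mulVec_pos hφ0
      simpa [hc] using this
    have expand : ∀ t : ℝ, (f - t • u) ⬝ᵥ (M *ᵥ (f - t • u))
        = f ⬝ᵥ (M *ᵥ f) - 2 * t * (φ ⬝ᵥ f) + t ^ 2 * c := by
      intro t
      simp only [Matrix.mulVec_sub, Matrix.mulVec_smul, dotProduct_sub,
        sub_dotProduct, dotProduct_smul, smul_dotProduct, smul_eq_mul,
        hBfu, hBuf, hBuu]
      ring
    have hpos : 0 ≤ (f - (φ ⬝ᵥ f / c) • u) ⬝ᵥ (M *ᵥ (f - (φ ⬝ᵥ f / c) • u)) := by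
      by_cases h0 : f - (φ ⬝ᵥ f / c) • u = 0
      · simp [h0]
      · exact le_of_lt (by simpa using hK.inv.dotProduct_mulVec_pos h0)
    rw [expand] at hpos
    have h3 : 0 ≤ c * (f ⬝ᵥ (M *ᵥ f)) - (φ ⬝ᵥ f) ^ 2 := by
      have heq : c * (f ⬝ᵥ (M *ᵥ f) - 2 * (φ ⬝ᵥ f / c) * (φ ⬝ᵥ f) + (φ ⬝ᵥ f / c) ^ 2 * c)
          = c * (f ⬝ᵥ (M *ᵥ f)) - (φ ⬝ᵥ f) ^ 2 := by
        field_simp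
        ring
      rw [← heq]
      exact mul_nonneg hcpos.le hpos
    nlinarith [mul_le_mul_of_nonneg_left hf hcpos.le]
  rw [htarget]
  constructor
  · -- membership
    by_cases hφ0 : φ = 0
    · exact ⟨0, by simp, by simp [hLf, hφ0, hc]⟩
    · have hcpos : 0 < c := by simpa [hc] using hK.dotProduct_mulVec_pos hφ0
      refine ⟨(Real.sqrt c)⁻¹ • u, ?_, ?_⟩
      · simp only [Matrix.mulVec_smul, smul_dotProduct, dotProduct_smul,
          smul_eq_mul, hBuu]
        have hs : Real.sqrt c ≠ 0 := (Real.sqrt_pos.mpr hcpos).ne'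
        rw [show (Real.sqrt c)⁻¹ * ((Real.sqrt c)⁻¹ * c) = 1 from by
          field_simp [Real.mul_self_sqrt hcpos.le]
          exact (Real.sq_sqrt hcpos.le).symm]
      · rw [hLf]
        rw [dotProduct_smul, smul_eq_mul]
        have hφu : φ ⬝ᵥ u = c := by rw [hc]
        rw [hφu]
        have hs : Real.sqrt c ≠ 0 := (Real.sqrt_pos.mpr hcpos).ne'
        field_simp [Real.sq_sqrt hcpos.le]
        exact Real.sq_sqrt hcpos.le
  · rintro y ⟨f, hf, rfl⟩
    rw [hLf]
    exact key f hf
end
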